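/- (Proposition 1, flow form.) Suppose (A2) holds. Let θ : [t₀, ∞) → ℝⁿ be differentiable with θ′(t) = F(θ(t)) for all t ≥ t₀. Then h(θ(t)) ≥ h(θ(t₀))·e^{−c(t−t₀)} for all t ≥ t₀. Consequently, the safe set C is forward invariant for the dynamics θ′ = F(θ), and every superlevel set C_ρ (ρ ≤ 0 in the image of h) is forward invariant. -/

import Mathlib

open scoped RealInnerProductSpace
open Set Filter

open Classical in
/-- The safe-gradient-flow vector field `F`. -/
noncomputable def Fvec {n : ℕ} (J h : EuclideanSpace ℝ (Fin n) → ℝ) (c : ℝ)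
    (θ : EuclideanSpace ℝ (Fin n)) : EuclideanSpace ℝ (Fin n) :=
  if gradient h θ = 0 then -gradient J θ
  else -gradient J θ +
    (max (⟪gradient J θ, gradient h θ⟫ - c * h θ) 0 / ‖gradient h θ‖ ^ 2) • gradient h θ
/-- Proposition 1, flow form: under (A2), along any solution of θ' = F(θ),
`h(θ(t)) ≥ h(θ(t₀))·exp(−c(t−t₀))`; consequently the safe set C and every superlevel
set C_ρ (ρ ≤ 0 in the image of h) are forward invariant. -/
lemma key_ineq {n : ℕ} (J h : EuclideanSpace ℝ (Fin n) → ℝ) {c : ℝ} (hc : 0 ≤ c)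
    (hzero : ∀ x, gradient h x = 0 → 0 ≤ h x) (x : EuclideanSpace ℝ (Fin n)) :
    -(c * h x) ≤ ⟪gradient h x, Fvec J h c x⟫ := by
  by_cases hg : gradient h x = 0
  · simp only [Fvec, hg, if_true, inner_zero_left, neg_nonpos]
    exact mul_nonneg hc (hzero x hg)
  · have hns : ‖gradient h x‖ ^ 2 ≠ 0 := by
      simpa using fun hz => hg (norm_eq_zero.mp hz)
    rw [Fvec, if_neg hg, inner_add_right, inner_neg_right, real_inner_smul_right,
      real_inner_self_eq_norm_sq, div_mul_cancel₀ _ hns, real_inner_comm]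
    have := le_max_left (⟪gradient J x, gradient h x⟫ - c * h x) 0
    linarith

theorem stmt3 {n : ℕ} (hn : 1 ≤ n) (J h : EuclideanSpace ℝ (Fin n) → ℝ) (c : ℝ) (hc : 0 < c)
    (hJ : ContDiff ℝ 1 J) (hJ' : LocallyLipschitz (gradient J))
    (hh : ContDiff ℝ 1 h) (hh' : LocallyLipschitz (gradient h))
    (hA2 : (∃ θ, 0 ≤ h θ) ∧ ∀ ρ ∈ Set.range h, ρ ≤ 0 →
      ∃ L > 0, ∀ θ, h θ ≤ 0 → ρ ≤ h θ → L < ‖gradient h θ‖) :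
    ∀ (t₀ : ℝ) (θ : ℝ → EuclideanSpace ℝ (Fin n)),
      (∀ t ≥ t₀, HasDerivAt θ (Fvec J h c (θ t)) t) →
      (∀ t ≥ t₀, h (θ t₀) * Real.exp (-(c * (t - t₀))) ≤ h (θ t)) ∧
      (0 ≤ h (θ t₀) → ∀ t ≥ t₀, 0 ≤ h (θ t)) ∧
      (∀ ρ ∈ Set.range h, ρ ≤ 0 → ρ ≤ h (θ t₀) → ∀ t ≥ t₀, ρ ≤ h (θ t)) := by
  -- wherever the gradient of h vanishes, h is nonnegative
  have hzero : ∀ x, gradient h x = 0 → 0 ≤ h x := by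
    intro x hx
    by_contra hneg
    push_neg at hneg
    obtain ⟨L, hL, hLall⟩ := hA2.2 (h x) ⟨x, rfl⟩ hneg.le
    have := hLall x hneg.le le_rfl
    rw [hx, norm_zero] at this
    linarith
  intro t₀ θ hθ
  -- derivative of h ∘ θ
  have hgθ : ∀ t ≥ t₀, HasDerivAt (fun s => h (θ s)) ⟪gradient h (θ t), Fvec J h c (θ t)⟫ t := by
    intro t ht
    have hd : HasFDerivAt h (InnerProductSpace.toDual ℝ _ (gradient h (θ t))) (θ t) :=
      ((hh.differentiable one_ne_zero) (θ t)).hasGradientAt.hasFDerivAt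
    have := hd.comp_hasDerivAt t (hθ t ht)
    exact (by simpa only [InnerProductSpace.toDual_apply_apply] using this : HasDerivAt (h ∘ θ) _ t)
  -- the auxiliary function φ
  set φ : ℝ → ℝ := fun t => h (θ t) * Real.exp (c * (t - t₀)) with hφ
  have hφd : ∀ t ≥ t₀, HasDerivAt φ
      ((⟪gradient h (θ t), Fvec J h c (θ t)⟫ + c * h (θ t)) * Real.exp (c * (t - t₀))) t := by
    intro t ht
    have he : HasDerivAt (fun s : ℝ => Real.exp (c * (s - t₀))) (c * Real.exp (c * (t - t₀))) t := by
      have h1 : HasDerivAt (fun s : ℝ => c * (s - t₀)) c t :=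
        ((hasDerivAt_id t).sub_const t₀).const_mul c |>.congr_deriv (mul_one c)
      simpa [mul_comm] using h1.exp
    have : HasDerivAt (fun s => h (θ s) * Real.exp (c * (s - t₀))) _ t := (hgθ t ht).fun_mul he
    convert this using 1
    ring
  have hmono : MonotoneOn φ (Ici t₀) := by
    apply monotoneOn_of_deriv_nonneg (convex_Ici t₀)
    · exact fun t ht => ((hφd t ht).continuousAt).continuousWithinAt
    · intro t ht
      rw [interior_Ici] at ht
      exact ((hφd t ht.le).differentiableAt).differentiableWithinAt
    · intro t ht
      rw [interior_Ici] at ht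
      rw [(hφd t ht.le).deriv]
      have := key_ineq J h hc.le hzero (θ t)
      have he := (Real.exp_pos (c * (t - t₀))).le
      nlinarith
  have main : ∀ t ≥ t₀, h (θ t₀) * Real.exp (-(c * (t - t₀))) ≤ h (θ t) := by
    intro t ht
    have := hmono (self_mem_Ici) ht ht
    simp only [hφ, sub_self, mul_zero, Real.exp_zero, mul_one] at this
    set E := Real.exp (c * (t - t₀)) with hE
    have hEpos : 0 < E := Real.exp_pos _
    rw [Real.exp_neg]
    calc h (θ t₀) * E⁻¹ ≤ (h (θ t) * E) * E⁻¹ :=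
          mul_le_mul_of_nonneg_right this (inv_nonneg.mpr hEpos.le)
      _ = h (θ t) := by field_simp
  refine ⟨main, ?_, ?_⟩
  · intro h0 t ht
    have := main t ht
    nlinarith [Real.exp_pos (-(c * (t - t₀)))]
  · intro ρ _ hρ0 hρ t ht
    have hm := main t ht
    have hE1 : Real.exp (-(c * (t - t₀))) ≤ 1 := by
      apply Real.exp_le_one_iff.mpr
      nlinarith
    have hEpos := Real.exp_pos (-(c * (t - t₀)))
    rcases le_or_gt 0 (h (θ t₀)) with h0 | h0
    · nlinarith
    · nlinarith
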